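/- If e is a weak left unit of a weak coherent partial monoid with zero (X₀,R₀) and e ≠ 0, then e is a relational left unit of the restricted structure (X,R) where X = X₀ \ {0}; hence the nonzero elements form an object-free category. -/
import Mathlib


/-- Relational associativity. -/
def RelAssoc {X : Type*} (R : X → X → X → Prop) : Prop :=
  ∀ u x y z : X, (∃ v, R u x v ∧ R v y z) ↔ (∃ v, R u v z ∧ R v x y)

/-- Definedness: `D R x y` iff the composite of `x` and `y` exists. -/
def D {X : Type*} (R : X → X → X → Prop) (x y : X) : Prop := ∃ z, R z x y

/-- Relational left unit. -/
def IsLUnit {X : Type*} (R : X → X → X → Prop) (e : X) : Prop :=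
  (∃ x, R x e x) ∧ ∀ x y, R y e x → y = x

/-- Relational right unit. -/
def IsRUnit {X : Type*} (R : X → X → X → Prop) (e : X) : Prop :=
  (∃ x, R x x e) ∧ ∀ x y, R y x e → y = x

/-- Relational unit: a left or a right unit. -/
def IsUnit' {X : Type*} (R : X → X → X → Prop) (e : X) : Prop :=
  IsLUnit R e ∨ IsRUnit R e

/-- Relational monoid: relationally associative, and every element has a left
unit composable on the left and a right unit composable on the right. -/
def RelMonoid {X : Type*} (R : X → X → X → Prop) : Prop :=
  RelAssoc R ∧ ∀ x, (∃ e, IsLUnit R e ∧ D R e x) ∧ (∃ e, IsRUnit R e ∧ D R x e)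

/-- Coherence. -/
def Coherent {X : Type*} (R : X → X → X → Prop) : Prop :=
  ∀ v x y z, R v x y → D R y z → D R v z

/-- Weak functionality: `R` is a partial operation. -/
def WFun {X : Type*} (R : X → X → X → Prop) : Prop :=
  ∀ x x' y z, R x y z → R x' y z → x = x'

/-- Weak left unit of a relation with zero `z0`. -/
def WeakLUnit {X : Type*} (R : X → X → X → Prop) (z0 e : X) : Prop :=
  (∃ x, R x e x) ∧ ∀ x, R x e x ∨ R z0 e x

/-- Weak right unit of a relation with zero `z0`. -/
def WeakRUnit {X : Type*} (R : X → X → X → Prop) (z0 e : X) : Prop :=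
  (∃ x, R x x e) ∧ ∀ x, R x x e ∨ R z0 x e

theorem stmt18 {X₀ : Type*} (R₀ : X₀ → X₀ → X₀ → Prop) (z0 : X₀)
    (hassoc : RelAssoc R₀) (hF : WFun R₀) (hC : Coherent R₀)
    (hz : ∀ x, R₀ z0 z0 x ∧ R₀ z0 x z0)
    (hu : ∀ x, (∃ e, WeakLUnit R₀ z0 e ∧ R₀ x e x) ∧
               (∃ e, WeakRUnit R₀ z0 e ∧ R₀ x x e))
    (e : X₀) (he : e ≠ z0) (hwe : WeakLUnit R₀ z0 e) :
    IsLUnit (fun a b c : {x : X₀ // x ≠ z0} => R₀ a.1 b.1 c.1) ⟨e, he⟩ := by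
  have hee : R₀ e e e := by
    obtain ⟨f, hfR, hef⟩ := (hu e).2
    rcases hwe.2 f with hf | hf
    · obtain ⟨w, hw1, hw2⟩ := (hassoc e e e f).mp ⟨f, hef, hf⟩
      rcases hwe.2 e with h | h
      · rcases hF _ _ _ _ hw2 h with rfl; exact h
      · rcases hF _ _ _ _ hw2 h with rfl
        exact absurd (hF _ _ _ _ hw1 (hz f).1) he
    · exact absurd (hF _ _ _ _ hef hf) he
  constructor
  · exact ⟨⟨e, he⟩, hee⟩
  · rintro ⟨x, hx⟩ ⟨y, hy⟩ h
    rcases hwe.2 x with h' | h'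
    · exact Subtype.ext (hF _ _ _ _ h h')
    · exact absurd (hF _ _ _ _ h h') hy
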